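/- Let $E$ be a real locally convex space and $A \subseteq E$ a bounded set. Then the s-convex hull of $A$ is contained in the closed convex hull of $A$: every convergent sum $\sum_{i \ge 1} a_i x_i$ with $x_i \in A$, $a_i \ge 0$, $\sum_{i\ge 1} a_i = 1$ lies in $\overline{\mathrm{co}}(A)$. -/

import Mathlib

open Set Pointwise Filter

/-- For a bounded set `A` in a real Hausdorff locally convex space, every sum of a
convergent series `∑ aᵢ • xᵢ` with `xᵢ ∈ A`, `aᵢ ≥ 0`, `∑ aᵢ = 1` lies in the
closed convex hull of `A`: the s-convex hull is contained in the closed convex hull. -/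
theorem stmt6 {E : Type*} [AddCommGroup E] [Module ℝ E] [TopologicalSpace E]
    [IsTopologicalAddGroup E] [ContinuousSMul ℝ E] [LocallyConvexSpace ℝ E] [T2Space E]
    {A : Set E} (hA : Bornology.IsVonNBounded ℝ A)
    (a : ℕ → ℝ) (z : ℕ → E) (ha : ∀ i, 0 ≤ a i) (hz : ∀ i, z i ∈ A)
    (hsum : Tendsto (fun n => ∑ i ∈ Finset.range n, a i) atTop (nhds 1))
    {y : E} (hy : Tendsto (fun n => ∑ i ∈ Finset.range n, a i • z i) atTop (nhds y)) :
    y ∈ closure (convexHull ℝ A) := by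
  -- renormalized partial sums
  set c : ℕ → ℝ := fun n => ∑ i ∈ Finset.range n, a i with hc
  have hpos : ∀ᶠ n in atTop, 0 < c n :=
    hsum.eventually (eventually_gt_nhds zero_lt_one)
  have hmem : ∀ᶠ n in atTop, (c n)⁻¹ • (∑ i ∈ Finset.range n, a i • z i) ∈ convexHull ℝ A := by
    filter_upwards [hpos] with n hn
    have := Finset.centerMass_mem_convexHull (Finset.range n)
      (fun i _ => ha i) hn (fun i _ => hz i)
    simpa [Finset.centerMass, hc] using this
  have hlim : Tendsto (fun n => (c n)⁻¹ • (∑ i ∈ Finset.range n, a i • z i)) atTop (nhds y) := by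
    have : Tendsto (fun n => (c n)⁻¹) atTop (nhds (1 : ℝ)⁻¹) :=
      hsum.inv₀ one_ne_zero
    simpa using this.smul hy
  exact mem_closure_of_tendsto hlim hmem
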